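/- Let n ≥ 1 and S = J_{2n} ⊗ J_2. Inside the orthogonal Lie algebra so(S), the subalgebras Γ = {A ⊗ I_2 : A ∈ sp(2n,ℂ)} and Γ' = {I_{2n} ⊗ B : B ∈ sp(2,ℂ)} are mutual centralizers: {X ∈ so(S) : [X, A ⊗ I_2] = 0 for all A ∈ sp(2n,ℂ)} = Γ', and {X ∈ so(S) : [X, I_{2n} ⊗ B] = 0 for all B ∈ sp(2,ℂ)} = Γ. Hence (sp(2n,ℂ), sp(2,ℂ)) is a Howe dual pair in so(4n,ℂ). -/

import Mathlib

open Matrix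
open Kronecker

noncomputable section

/-- J_{2n} = [[0, I_n], [−I_n, 0]] (rows/columns indexed by Fin n ⊕ Fin n). -/
def Jmat (n : ℕ) : Matrix (Fin n ⊕ Fin n) (Fin n ⊕ Fin n) ℂ :=
  Matrix.fromBlocks 0 1 (-1) 0

/-- J_2 = [[0,1],[−1,0]]. -/
def J2 : Matrix (Fin 2) (Fin 2) ℂ := !![0, 1; -1, 0]

/-- sp(2n,ℂ) = {A : Aᵀ J_{2n} + J_{2n} A = 0}. -/
def spSet (n : ℕ) : Set (Matrix (Fin n ⊕ Fin n) (Fin n ⊕ Fin n) ℂ) :=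
  {A | Aᵀ * Jmat n + Jmat n * A = 0}

/-- sp(2,ℂ) = {B : Bᵀ J_2 + J_2 B = 0}. -/
def sp2Set : Set (Matrix (Fin 2) (Fin 2) ℂ) :=
  {B | Bᵀ * J2 + J2 * B = 0}

/-- S = J_{2n} ⊗ J_2, a symmetric nondegenerate bilinear form on ℂ^{4n}. -/
def Smat (n : ℕ) :
    Matrix ((Fin n ⊕ Fin n) × Fin 2) ((Fin n ⊕ Fin n) × Fin 2) ℂ :=
  Jmat n ⊗ₖ J2

/-- so(S) = {X : Xᵀ S + S X = 0}. -/
def soSSet (n : ℕ) :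
    Set (Matrix ((Fin n ⊕ Fin n) × Fin 2) ((Fin n ⊕ Fin n) × Fin 2) ℂ) :=
  {X | Xᵀ * Smat n + Smat n * X = 0}

/-- φ(A,B) = A ⊗ I_2 + I_{2n} ⊗ B. -/
def phiMap (n : ℕ) (A : Matrix (Fin n ⊕ Fin n) (Fin n ⊕ Fin n) ℂ)
    (B : Matrix (Fin 2) (Fin 2) ℂ) :
    Matrix ((Fin n ⊕ Fin n) × Fin 2) ((Fin n ⊕ Fin n) × Fin 2) ℂ :=
  A ⊗ₖ (1 : Matrix (Fin 2) (Fin 2) ℂ) +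
    (1 : Matrix (Fin n ⊕ Fin n) (Fin n ⊕ Fin n) ℂ) ⊗ₖ B

lemma hG_mem (n : ℕ) (a : Matrix (Fin n) (Fin n) ℂ) :
    Matrix.fromBlocks a 0 0 (-aᵀ) ∈ spSet n := by
  simp only [spSet, Set.mem_setOf_eq, Jmat, Matrix.fromBlocks_transpose,
    Matrix.fromBlocks_multiply, Matrix.fromBlocks_add, Matrix.transpose_zero,
    Matrix.transpose_neg, Matrix.transpose_transpose]
  rw [← Matrix.fromBlocks_zero]
  congr 1 <;> simp [Matrix.mul_one, Matrix.one_mul]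

lemma hB_mem (n : ℕ) :
    Matrix.fromBlocks 0 1 0 0 ∈ spSet n := by
  simp only [spSet, Set.mem_setOf_eq, Jmat, Matrix.fromBlocks_transpose,
    Matrix.fromBlocks_multiply, Matrix.fromBlocks_add, Matrix.transpose_zero,
    Matrix.transpose_one]
  rw [← Matrix.fromBlocks_zero]
  congr 1 <;> simp

lemma sp_comm {n : ℕ} (P : Matrix (Fin n ⊕ Fin n) (Fin n ⊕ Fin n) ℂ)
    (h : ∀ A ∈ spSet n, P * A = A * P) : ∃ c : ℂ, P = c • 1 := by
  obtain ⟨p, q, r, s, rfl⟩ : ∃ p q r s, P = Matrix.fromBlocks p q r s :=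
    ⟨_, _, _, _, (Matrix.fromBlocks_toBlocks P).symm⟩
  have hg : ∀ a : Matrix (Fin n) (Fin n) ℂ,
      p * a = a * p ∧ -(q * aᵀ) = a * q ∧ r * a = -(aᵀ * r) ∧ -(s * aᵀ) = -(aᵀ * s) := by
    intro a
    have := h _ (hG_mem n a)
    rw [Matrix.fromBlocks_multiply, Matrix.fromBlocks_multiply] at this
    have h4 := Matrix.fromBlocks_inj.mp this
    simp only [Matrix.mul_zero, Matrix.zero_mul, add_zero, zero_add,
      Matrix.mul_neg, Matrix.neg_mul] at h4
    exact ⟨h4.1, h4.2.1, h4.2.2.1, h4.2.2.2⟩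
  have hq : q = 0 := by
    have := (hg 1).2.1
    simp only [Matrix.transpose_one, Matrix.mul_one, Matrix.one_mul] at this
    ext i j
    have e := congrFun (congrFun this i) j
    simp only [Matrix.neg_apply] at e
    have : q i j = 0 := by linear_combination -e/2
    simpa using this
  have hr : r = 0 := by
    have := (hg 1).2.2.1
    simp only [Matrix.transpose_one, Matrix.mul_one, Matrix.one_mul] at this
    ext i j
    have e := congrFun (congrFun this i) j
    simp only [Matrix.neg_apply] at e
    have : r i j = 0 := by linear_combination e/2
    simpa using this
  have hp : ∃ c : ℂ, p = c • 1 := by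
    obtain ⟨c, hc⟩ := Matrix.mem_range_scalar_iff_commute_single'.mpr
      (fun i j => ((hg _).1).symm)
    exact ⟨c, by simpa [Matrix.scalar_apply, Matrix.smul_one_eq_diagonal] using hc.symm⟩
  have hs : ∃ c : ℂ, s = c • 1 := by
    have hcomm : ∀ a : Matrix (Fin n) (Fin n) ℂ, s * a = a * s := by
      intro a
      have := (hg aᵀ).2.2.2
      rw [Matrix.transpose_transpose] at this
      exact neg_injective this
    obtain ⟨c, hc⟩ := Matrix.mem_range_scalar_iff_commute_single'.mpr
      (fun i j => (hcomm _).symm)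
    exact ⟨c, by simpa [Matrix.scalar_apply, Matrix.smul_one_eq_diagonal] using hc.symm⟩
  obtain ⟨c, rfl⟩ := hp
  obtain ⟨d, rfl⟩ := hs
  have hb := h _ (hB_mem n)
  rw [Matrix.fromBlocks_multiply, Matrix.fromBlocks_multiply] at hb
  have h4 := Matrix.fromBlocks_inj.mp hb
  simp only [Matrix.mul_zero, Matrix.zero_mul, add_zero, zero_add, hq, hr,
    Matrix.mul_one, Matrix.one_mul] at h4
  have hcd : (c • (1 : Matrix (Fin n) (Fin n) ℂ)) = d • 1 := h4.2.1
  subst hq hr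
  rw [← hcd]
  refine ⟨c, ?_⟩
  rw [← Matrix.fromBlocks_one, Matrix.fromBlocks_smul]
  simp

lemma hH_mem : !![(1:ℂ), 0; 0, -1] ∈ sp2Set := by
  show _ + _ = _
  rw [show (!![(1:ℂ), 0; 0, -1])ᵀ = !![(1:ℂ), 0; 0, -1] from (Matrix.transposeᵣ_eq _).symm]
  ext i j
  fin_cases i <;> fin_cases j <;>
    norm_num [Matrix.mul_apply, Fin.sum_univ_two, J2]

lemma hE_mem : !![(0:ℂ), 1; 0, 0] ∈ sp2Set := by
  show _ + _ = _
  rw [show (!![(0:ℂ), 1; 0, 0])ᵀ = !![(0:ℂ), 0; 1, 0] from (Matrix.transposeᵣ_eq _).symm]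
  ext i j
  fin_cases i <;> fin_cases j <;>
    norm_num [Matrix.mul_apply, Fin.sum_univ_two, J2]

lemma sp2_comm (P : Matrix (Fin 2) (Fin 2) ℂ)
    (h : ∀ B ∈ sp2Set, P * B = B * P) : ∃ c : ℂ, P = c • 1 := by
  have hH := h _ hH_mem
  have hE := h _ hE_mem
  have e1 := congrFun (congrFun hH 0) 1
  have e2 := congrFun (congrFun hH 1) 0
  have e3 := congrFun (congrFun hE 0) 1
  norm_num [Matrix.mul_apply, Fin.sum_univ_two] at e1 e2 e3
  refine ⟨P 0 0, ?_⟩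
  ext i j
  fin_cases i <;> fin_cases j <;> simp [Matrix.one_apply]
  · linear_combination -e1/2
  · linear_combination e2/2
  · linear_combination -e3

/-- transpose of a Kronecker product -/
lemma kron_transpose {l m p q : Type*} (A : Matrix l m ℂ) (B : Matrix p q ℂ) :
    (A ⊗ₖ B)ᵀ = Aᵀ ⊗ₖ Bᵀ :=
  (Matrix.kroneckerMap_transpose _ A B).symm

/-- A ⊗ M = 0 with A i j ≠ 0 forces M = 0. -/
lemma kron_left_cancel {l m p q : Type*} {A : Matrix l m ℂ} {M : Matrix p q ℂ}
    {i : l} {j : m} (hA : A i j ≠ 0) (h : A ⊗ₖ M = 0) : M = 0 := by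
  ext a b
  have := congrFun (congrFun h (i, a)) (j, b)
  simp only [Matrix.kroneckerMap_apply, Matrix.zero_apply] at this
  simpa using (mul_eq_zero.mp this).resolve_left hA

lemma soS_one_kron {n : ℕ} (C : Matrix (Fin 2) (Fin 2) ℂ) :
    ((1 : Matrix (Fin n ⊕ Fin n) (Fin n ⊕ Fin n) ℂ) ⊗ₖ C)ᵀ * Smat n +
      Smat n * ((1 : Matrix (Fin n ⊕ Fin n) (Fin n ⊕ Fin n) ℂ) ⊗ₖ C)
      = Jmat n ⊗ₖ (Cᵀ * J2 + J2 * C) := by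
  rw [kron_transpose, Matrix.transpose_one, Smat, ← Matrix.mul_kronecker_mul,
    ← Matrix.mul_kronecker_mul, one_mul, mul_one, ← Matrix.kronecker_add]

lemma soS_kron_one {n : ℕ} (A : Matrix (Fin n ⊕ Fin n) (Fin n ⊕ Fin n) ℂ) :
    (A ⊗ₖ (1 : Matrix (Fin 2) (Fin 2) ℂ))ᵀ * Smat n +
      Smat n * (A ⊗ₖ (1 : Matrix (Fin 2) (Fin 2) ℂ))
      = (Aᵀ * Jmat n + Jmat n * A) ⊗ₖ J2 := by
  rw [kron_transpose, Matrix.transpose_one, Smat, ← Matrix.mul_kronecker_mul,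
    ← Matrix.mul_kronecker_mul, one_mul, mul_one, ← Matrix.add_kronecker]

/-- inside so(S), S = J_{2n} ⊗ J_2, the subalgebras
Γ = {A ⊗ I₂ : A ∈ sp(2n,ℂ)} and Γ' = {I_{2n} ⊗ B : B ∈ sp(2,ℂ)} are mutual
centralizers: (sp(2n,ℂ), sp(2,ℂ)) is a Howe dual pair in so(4n,ℂ). -/
theorem statement_7 (n : ℕ) (hn : 1 ≤ n) :
    {X ∈ soSSet n | ∀ A ∈ spSet n,
        ⁅X, A ⊗ₖ (1 : Matrix (Fin 2) (Fin 2) ℂ)⁆ = 0}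
      = {X | ∃ B ∈ sp2Set,
          X = (1 : Matrix (Fin n ⊕ Fin n) (Fin n ⊕ Fin n) ℂ) ⊗ₖ B} ∧
    {X ∈ soSSet n | ∀ B ∈ sp2Set,
        ⁅X, (1 : Matrix (Fin n ⊕ Fin n) (Fin n ⊕ Fin n) ℂ) ⊗ₖ B⁆ = 0}
      = {X | ∃ A ∈ spSet n, X = A ⊗ₖ (1 : Matrix (Fin 2) (Fin 2) ℂ)} := by
  have i0 : Fin n := ⟨0, hn⟩
  have hJne : Jmat n (Sum.inl i0) (Sum.inr i0) ≠ 0 := by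
    simp [Jmat, Matrix.fromBlocks_apply₁₂, Matrix.one_apply]
  have hJ2ne : J2 0 1 ≠ 0 := by norm_num [J2]
  constructor
  · ext X
    simp only [Set.mem_setOf_eq, Set.mem_sep_iff]
    constructor
    · rintro ⟨hso, hcomm⟩
      have hc : ∀ A ∈ spSet n,
          X * (A ⊗ₖ (1 : Matrix (Fin 2) (Fin 2) ℂ))
            = (A ⊗ₖ (1 : Matrix (Fin 2) (Fin 2) ℂ)) * X := by
        intro A hA
        have := hcomm A hA
        rwa [Ring.lie_def, sub_eq_zero] at this
      set Y : Fin 2 → Fin 2 → Matrix (Fin n ⊕ Fin n) (Fin n ⊕ Fin n) ℂ :=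
        fun a b => Matrix.of fun i j => X (i, a) (j, b) with hY
      have hYcomm : ∀ a b, ∀ A ∈ spSet n, Y a b * A = A * Y a b := by
        intro a b A hA
        ext i j
        have e := congrFun (congrFun (hc A hA) (i, a)) (j, b)
        simp only [Matrix.mul_apply, Fintype.sum_prod_type, Matrix.kroneckerMap_apply,
          Matrix.one_apply, mul_ite, ite_mul, mul_one, mul_zero, one_mul, zero_mul,
          Finset.sum_ite_eq, Finset.sum_ite_eq', Finset.mem_univ, if_true] at e
        simpa [Matrix.mul_apply, hY] using e
      choose cf hcf using fun a b => sp_comm (Y a b) (hYcomm a b)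
      refine ⟨Matrix.of cf, ?_, ?_⟩
      · -- Matrix.of cf ∈ sp2Set
        have hXeq : X = (1 : Matrix (Fin n ⊕ Fin n) (Fin n ⊕ Fin n) ℂ) ⊗ₖ (Matrix.of cf) := by
          ext ⟨i, a⟩ ⟨j, b⟩
          have := congrFun (congrFun (hcf a b) i) j
          simp only [hY, Matrix.of_apply, Matrix.smul_apply, Matrix.one_apply,
            smul_eq_mul] at this ⊢
          simp only [Matrix.kroneckerMap_apply, Matrix.one_apply, Matrix.of_apply]
          rw [this, mul_comm]
        have h0 : Jmat n ⊗ₖ ((Matrix.of cf)ᵀ * J2 + J2 * (Matrix.of cf)) = 0 := by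
          rw [← soS_one_kron, ← hXeq]; exact hso
        exact kron_left_cancel hJne h0
      · -- X = 1 ⊗ₖ (Matrix.of cf)
        ext ⟨i, a⟩ ⟨j, b⟩
        have := congrFun (congrFun (hcf a b) i) j
        simp only [hY, Matrix.of_apply, Matrix.smul_apply, Matrix.one_apply,
          smul_eq_mul] at this
        simp only [Matrix.kroneckerMap_apply, Matrix.one_apply, Matrix.of_apply]
        rw [this, mul_comm]
    · rintro ⟨B, hB, rfl⟩
      constructor
      · show _ + _ = 0
        rw [soS_one_kron, hB, Matrix.kronecker_zero]
      · intro A hA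
        rw [Ring.lie_def, ← Matrix.mul_kronecker_mul, ← Matrix.mul_kronecker_mul,
          one_mul, mul_one, one_mul, mul_one, sub_self]
  · ext X
    simp only [Set.mem_setOf_eq, Set.mem_sep_iff]
    constructor
    · rintro ⟨hso, hcomm⟩
      have hc : ∀ B ∈ sp2Set,
          X * ((1 : Matrix (Fin n ⊕ Fin n) (Fin n ⊕ Fin n) ℂ) ⊗ₖ B)
            = ((1 : Matrix (Fin n ⊕ Fin n) (Fin n ⊕ Fin n) ℂ) ⊗ₖ B) * X := by
        intro B hB
        have := hcomm B hB
        rwa [Ring.lie_def, sub_eq_zero] at this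
      set Z : (Fin n ⊕ Fin n) → (Fin n ⊕ Fin n) → Matrix (Fin 2) (Fin 2) ℂ :=
        fun i j => Matrix.of fun a b => X (i, a) (j, b) with hZ
      have hZcomm : ∀ i j, ∀ B ∈ sp2Set, Z i j * B = B * Z i j := by
        intro i j B hB
        ext a b
        have e := congrFun (congrFun (hc B hB) (i, a)) (j, b)
        simp only [Matrix.mul_apply, Fintype.sum_prod_type, Matrix.kroneckerMap_apply,
          Matrix.one_apply, mul_ite, ite_mul, mul_one, mul_zero, one_mul, zero_mul,
          Finset.sum_ite_eq, Finset.sum_ite_eq', Finset.mem_univ, if_true] at e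
        simpa [Matrix.mul_apply, hZ] using e
      choose cf hcf using fun i j => sp2_comm (Z i j) (hZcomm i j)
      have hXeq : X = (Matrix.of cf) ⊗ₖ (1 : Matrix (Fin 2) (Fin 2) ℂ) := by
        ext ⟨i, a⟩ ⟨j, b⟩
        have := congrFun (congrFun (hcf i j) a) b
        simp only [hZ, Matrix.of_apply, Matrix.smul_apply, Matrix.one_apply,
          smul_eq_mul] at this
        simp only [Matrix.kroneckerMap_apply, Matrix.one_apply, Matrix.of_apply]
        rw [this]
      refine ⟨Matrix.of cf, ?_, hXeq⟩
      have h0 : ((Matrix.of cf)ᵀ * Jmat n + Jmat n * (Matrix.of cf)) ⊗ₖ J2 = 0 := by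
        rw [← soS_kron_one, ← hXeq]; exact hso
      ext i j
      have := congrFun (congrFun h0 (i, 0)) (j, 1)
      simp only [Matrix.kroneckerMap_apply, Matrix.zero_apply] at this
      have := (mul_eq_zero.mp this).resolve_right hJ2ne
      simpa using this
    · rintro ⟨A, hA, rfl⟩
      constructor
      · show _ + _ = 0
        rw [soS_kron_one, hA, Matrix.zero_kronecker]
      · intro B hB
        rw [Ring.lie_def, ← Matrix.mul_kronecker_mul, ← Matrix.mul_kronecker_mul,
          one_mul, mul_one, one_mul, mul_one, sub_self]


end
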